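/- If A is a Conley attractor of an IFS F on a compact metric space, then the basin of A equals the set of points x such that lim_{k→∞} d⃗(F^k({x}), A) = 0, where d⃗(X,Y) = max_{x∈X} min_{y∈Y} d(x,y). -/

import Mathlib

open Set Filter Metric Topology

/-- The set map of an IFS: `F(S) = ⋃ i, fᵢ(S)`. -/
def IFSApply {ι X : Type*} (f : ι → X → X) (S : Set X) : Set X := ⋃ i, f i '' S

/-- `lim_{k→∞} F^k(closure U) = A` in the Hausdorff (extended) metric. -/
def ConleyLim {ι X : Type*} [MetricSpace X] (f : ι → X → X) (U A : Set X) : Prop :=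
  Filter.Tendsto (fun k => EMetric.hausdorffEdist ((IFSApply f)^[k] (closure U)) A)
    Filter.atTop (nhds 0)

/-- A compact set `A` is a Conley attractor of the IFS `f` if there is an open `U ⊇ A`
with `A = lim_{k→∞} F^k(closure U)`. -/
def IsConleyAttractor {ι X : Type*} [MetricSpace X] (f : ι → X → X) (A : Set X) : Prop :=
  IsCompact A ∧ ∃ U : Set X, IsOpen U ∧ A ⊆ U ∧ ConleyLim f U A

/-- The basin of a Conley attractor: the union of all open sets `U` as in the definition. -/
def conleyBasin {ι X : Type*} [MetricSpace X] (f : ι → X → X) (A : Set X) : Set X :=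
  ⋃₀ {U : Set X | IsOpen U ∧ A ⊆ U ∧ ConleyLim f U A}

/-- `lim_{k→∞} F^k(S) = A` in the Hausdorff (extended) metric. -/
def IFSLim {ι X : Type*} [MetricSpace X] (f : ι → X → X) (S A : Set X) : Prop :=
  Filter.Tendsto (fun k => EMetric.hausdorffEdist ((IFSApply f)^[k] S) A)
    Filter.atTop (nhds 0)

/-- `A` is a strict attractor of the IFS `f`. -/
def IsStrictAttractor {ι X : Type*} [MetricSpace X] (f : ι → X → X) (A : Set X) : Prop :=
  A.Nonempty ∧ IsCompact A ∧ IFSApply f A = A ∧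
  ∃ U : Set X, IsOpen U ∧ A ⊆ U ∧
    ∀ S : Set X, S.Nonempty → IsCompact S → S ⊆ U → IFSLim f S A

/-- The basin of a strict attractor: the largest open `U` with
`lim_{k→∞} F^k(S) = A` for all nonempty compact `S ⊆ U`. -/
def strictBasin {ι X : Type*} [MetricSpace X] (f : ι → X → X) (A : Set X) : Set X :=
  ⋃₀ {U : Set X | IsOpen U ∧
    ∀ S : Set X, S.Nonempty → IsCompact S → S ⊆ U → IFSLim f S A}

section ConleyAux

open EMetric

variable {ι : Type*}

lemma IFSApply_mono {X : Type*} (f : ι → X → X) : Monotone (IFSApply f) :=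
  fun _ _ h => iUnion_mono fun _ => image_mono h

lemma IFSApply_iUnion {X : Type*} {κ : Sort*} (f : ι → X → X) (S : κ → Set X) :
    IFSApply f (⋃ j, S j) = ⋃ j, IFSApply f (S j) := by
  simp only [IFSApply, image_iUnion]
  rw [iUnion_comm]

lemma IFSApply_iterate_iUnion {X : Type*} {κ : Sort*} (f : ι → X → X) (k : ℕ) (S : κ → Set X) :
    (IFSApply f)^[k] (⋃ j, S j) = ⋃ j, (IFSApply f)^[k] (S j) := by
  induction k with
  | zero => simp
  | succ k ih => simp only [Function.iterate_succ_apply', ih, IFSApply_iUnion]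

lemma IFSApply_union {X : Type*} (f : ι → X → X) (S T : Set X) :
    IFSApply f (S ∪ T) = IFSApply f S ∪ IFSApply f T := by
  simp [IFSApply, image_union, iUnion_union_distrib]

lemma IFSApply_iterate_union {X : Type*} (f : ι → X → X) (k : ℕ) (S T : Set X) :
    (IFSApply f)^[k] (S ∪ T) = (IFSApply f)^[k] S ∪ (IFSApply f)^[k] T := by
  induction k with
  | zero => simp
  | succ k ih => simp only [Function.iterate_succ_apply', ih, IFSApply_union]

lemma dvec_mono {X : Type*} [MetricSpace X] {S T : Set X} (h : S ⊆ T) (A : Set X) :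
    (⨆ y ∈ S, infEdist y A) ≤ ⨆ y ∈ T, infEdist y A :=
  iSup₂_le fun y hy => le_iSup₂_of_le y (h hy) le_rfl

lemma dvec_le_hausdorffEdist {X : Type*} [MetricSpace X] (S A : Set X) :
    (⨆ y ∈ S, infEdist y A) ≤ hausdorffEdist S A :=
  iSup₂_le fun _ hy => infEdist_le_hausdorffEdist_of_mem hy

lemma hausdorffEdist_union_le_aux {X : Type*} [MetricSpace X] (S T A : Set X) :
    hausdorffEdist (S ∪ T) A ≤ hausdorffEdist S A ⊔ ⨆ y ∈ T, infEdist y A := by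
  unfold hausdorffEdist
  rw [hausdorffEDist_def]
  apply sup_le
  · refine iSup₂_le fun y hy => ?_
    rcases hy with h | h
    · exact (infEdist_le_hausdorffEdist_of_mem h).trans le_sup_left
    · refine le_trans ?_ le_sup_right
      exact le_iSup₂_of_le y h le_rfl
  · refine iSup₂_le fun y hy => le_trans ?_ le_sup_left
    calc infEdist y (S ∪ T) ≤ infEdist y S := infEdist_anti subset_union_left
      _ ≤ hausdorffEdist A S := infEdist_le_hausdorffEdist_of_mem hy
      _ = hausdorffEdist S A := hausdorffEdist_comm

lemma exists_open_nhd {X : Type*} [TopologicalSpace X] [Finite ι] (f : ι → X → X)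
    (hf : ∀ i, Continuous (f i)) (k : ℕ) :
    ∀ (x : X) (W : Set X), IsOpen W → (IFSApply f)^[k] {x} ⊆ W →
      ∃ V, IsOpen V ∧ x ∈ V ∧ (IFSApply f)^[k] V ⊆ W := by
  induction k with
  | zero => exact fun x W hW hxW => ⟨W, hW, hxW rfl, subset_rfl⟩
  | succ k ih =>
    intro x W hW hxW
    have hx : ∀ i, (IFSApply f)^[k] {f i x} ⊆ W := by
      intro i
      refine subset_trans ?_ hxW
      rw [Function.iterate_succ_apply]
      refine (IFSApply_mono f).iterate k ?_
      exact singleton_subset_iff.2 (mem_iUnion.2 ⟨i, mem_image_of_mem _ rfl⟩)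
    choose V hVopen hmem hsub using fun i => ih (f i x) W hW (hx i)
    refine ⟨⋂ i, (f i) ⁻¹' V i,
      isOpen_iInter_of_finite fun i => (hVopen i).preimage (hf i),
      mem_iInter.2 fun i => hmem i, ?_⟩
    rw [Function.iterate_succ_apply]
    have h1 : IFSApply f (⋂ i, (f i) ⁻¹' V i) ⊆ ⋃ i, V i :=
      iUnion_mono fun i => (image_mono (iInter_subset _ i)).trans (image_preimage_subset _ _)
    calc (IFSApply f)^[k] (IFSApply f (⋂ i, (f i) ⁻¹' V i))
        ⊆ (IFSApply f)^[k] (⋃ i, V i) := (IFSApply_mono f).iterate k h1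
      _ = ⋃ i, (IFSApply f)^[k] (V i) := IFSApply_iterate_iUnion f k V
      _ ⊆ W := iUnion_subset hsub

end ConleyAux

theorem conley_basin_eq {ι X : Type*} [MetricSpace X] [CompactSpace X]
    [Fintype ι] [Nonempty ι] (f : ι → X → X) (hf : ∀ i, Continuous (f i))
    (A : Set X) (hA : IsConleyAttractor f A) :
    conleyBasin f A =
      {x : X | Filter.Tendsto
        (fun k => ⨆ y ∈ (IFSApply f)^[k] {x}, EMetric.infEdist y A)
        Filter.atTop (nhds 0)} := by
  obtain ⟨hAc, U₀, hU₀o, hAU₀, hlim₀⟩ := hA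
  ext x
  simp only [mem_setOf_eq, conleyBasin, mem_sUnion, mem_setOf_eq]
  constructor
  · rintro ⟨U, ⟨hUo, hAU, hlim⟩, hxU⟩
    refine tendsto_of_tendsto_of_tendsto_of_le_of_le tendsto_const_nhds hlim
      (fun k => zero_le) (fun k => ?_)
    have hsub : (IFSApply f)^[k] {x} ⊆ (IFSApply f)^[k] (closure U) :=
      (IFSApply_mono f).iterate k (singleton_subset_iff.2 (subset_closure hxU))
    exact (dvec_mono hsub A).trans (dvec_le_hausdorffEdist _ _)
  · intro hx
    obtain ⟨δ, hδ, hthick⟩ := hAc.exists_thickening_subset_open hU₀o hAU₀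
    obtain ⟨k, hk⟩ := (hx.eventually (gt_mem_nhds (ENNReal.ofReal_pos.2 hδ))).exists
    have hsub : (IFSApply f)^[k] {x} ⊆ U₀ := fun y hy =>
      hthick (Metric.mem_thickening_iff_infEdist_lt.2
        (lt_of_le_of_lt (le_iSup₂_of_le y hy le_rfl) hk))
    obtain ⟨V', hV'o, hxV', hV'sub⟩ := exists_open_nhd f hf k x U₀ hU₀o hsub
    obtain ⟨r, hr, hball⟩ := Metric.nhds_basis_closedBall.mem_iff.1 (hV'o.mem_nhds hxV')
    have hclV : (IFSApply f)^[k] (closure (Metric.ball x r)) ⊆ closure U₀ :=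
      ((IFSApply_mono f).iterate k
        ((Metric.closure_ball_subset_closedBall).trans hball)).trans
        (hV'sub.trans subset_closure)
    have h2 : Filter.Tendsto
        (fun m => ⨆ y ∈ (IFSApply f)^[m] (closure (Metric.ball x r)), EMetric.infEdist y A)
        Filter.atTop (nhds 0) := by
      refine (tendsto_add_atTop_iff_nat k).1 ?_
      refine tendsto_of_tendsto_of_tendsto_of_le_of_le tendsto_const_nhds hlim₀
        (fun m => zero_le) (fun m => ?_)
      have hsub2 : (IFSApply f)^[m + k] (closure (Metric.ball x r))
          ⊆ (IFSApply f)^[m] (closure U₀) := by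
        rw [Function.iterate_add_apply]
        exact (IFSApply_mono f).iterate m hclV
      exact (dvec_mono hsub2 A).trans (dvec_le_hausdorffEdist _ _)
    refine ⟨U₀ ∪ Metric.ball x r, ⟨hU₀o.union Metric.isOpen_ball,
      hAU₀.trans subset_union_left, ?_⟩, Or.inr (Metric.mem_ball_self hr)⟩
    unfold ConleyLim
    have hmax : Filter.Tendsto
        (fun m => EMetric.hausdorffEdist ((IFSApply f)^[m] (closure U₀)) A
          ⊔ ⨆ y ∈ (IFSApply f)^[m] (closure (Metric.ball x r)), EMetric.infEdist y A)
        Filter.atTop (nhds 0) := by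
      simpa using hlim₀.max h2
    refine tendsto_of_tendsto_of_tendsto_of_le_of_le tendsto_const_nhds hmax
      (fun m => zero_le) (fun m => ?_)
    calc EMetric.hausdorffEdist ((IFSApply f)^[m] (closure (U₀ ∪ Metric.ball x r))) A
        = EMetric.hausdorffEdist ((IFSApply f)^[m] (closure U₀)
            ∪ (IFSApply f)^[m] (closure (Metric.ball x r))) A := by
          rw [closure_union, IFSApply_iterate_union]
      _ ≤ _ := hausdorffEdist_union_le_aux _ _ _
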